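/- Let k ≥ 2 be an integer, and let Z : (0, ∞) → ℝ be any function such that for every a > 0, Z(a) > 1 and q_{a,k}(Z(a)) = 0, where q_{a,k}(x) = a·x^k − a·x^{k−1} + x − k. Then Z is continuous on (0, ∞). -/

import Mathlib

/-- `q a k x = a*x^k - a*x^(k-1) + x - k`. -/
def hpjQ (a : ℝ) (k : ℕ) (x : ℝ) : ℝ := a * x ^ k - a * x ^ (k - 1) + x - k

section aux

variable {k : ℕ}

private lemma hpjD_lt (hk : 2 ≤ k) {x y : ℝ} (hx : 1 < x) (hxy : x < y) :
    x ^ (k - 1) * (x - 1) < y ^ (k - 1) * (y - 1) := by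
  have h1 : x ^ (k - 1) < y ^ (k - 1) :=
    pow_lt_pow_left₀ hxy (by linarith) (by omega)
  have h2 : (0:ℝ) < x - 1 := by linarith
  have h3 : (0:ℝ) < x ^ (k - 1) := pow_pos (by linarith) _
  nlinarith

private lemma hpj_key {a : ℝ} (ha : 0 < a) (hk : 2 ≤ k) {x : ℝ} (hx : 1 < x)
    (hq : hpjQ a k x = 0) : a * (x ^ (k - 1) * (x - 1)) = k - x ∧ x < k := by
  have hxk : x ^ k = x ^ (k - 1) * x := by
    rw [← pow_succ]; congr 1; omega
  have heq : a * (x ^ (k - 1) * (x - 1)) = k - x := by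
    unfold hpjQ at hq; rw [hxk] at hq; ring_nf; ring_nf at hq; linarith
  have hpos : 0 < a * (x ^ (k - 1) * (x - 1)) :=
    mul_pos ha (mul_pos (pow_pos (by linarith) _) (by linarith))
  exact ⟨heq, by linarith⟩

end aux

theorem stmt10 (k : ℕ) (hk : 2 ≤ k) (Z : ℝ → ℝ)
    (hZ : ∀ a : ℝ, 0 < a → 1 < Z a ∧ hpjQ a k (Z a) = 0) :
    ContinuousOn Z (Set.Ioi 0) := by
  -- Key facts about Z
  have key : ∀ a : ℝ, 0 < a →
      a * ((Z a) ^ (k - 1) * (Z a - 1)) = k - Z a ∧ 1 < Z a ∧ Z a < k := by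
    intro a ha
    obtain ⟨h1, h2⟩ := hZ a ha
    obtain ⟨heq, hlt⟩ := hpj_key ha hk h1 h2
    exact ⟨heq, h1, hlt⟩
  -- Z is strictly antitone on Ioi 0
  have hanti : ∀ a b : ℝ, 0 < a → 0 < b → a < b → Z b < Z a := by
    intro a b ha hb hab
    obtain ⟨hea, h1a, h2a⟩ := key a ha
    obtain ⟨heb, h1b, h2b⟩ := key b hb
    by_contra hle
    push_neg at hle
    rcases eq_or_lt_of_le hle with heqz | hlt
    · rw [heqz] at hea
      have hD : 0 < (Z b) ^ (k - 1) * (Z b - 1) :=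
        mul_pos (pow_pos (by linarith) _) (by linarith)
      have : a = b := by
        have := hea.trans heb.symm
        exact mul_right_cancel₀ (ne_of_gt hD) this
      linarith
    · -- Z a < Z b, so D(Za) < D(Zb) and k - Za > k - Zb
      have hD : (Z a) ^ (k - 1) * (Z a - 1) < (Z b) ^ (k - 1) * (Z b - 1) :=
        hpjD_lt hk h1a hlt
      have hDa : 0 < (Z a) ^ (k - 1) * (Z a - 1) :=
        mul_pos (pow_pos (by linarith) _) (by linarith)
      nlinarith
  -- Z surjects onto Ioo 1 k
  have hsurj : Set.Ioo (1:ℝ) k ⊆ Z '' Set.Ioi 0 := by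
    rintro x ⟨hx1, hxk⟩
    set D : ℝ := x ^ (k - 1) * (x - 1) with hDdef
    have hD : 0 < D := mul_pos (pow_pos (by linarith) _) (by linarith)
    set a : ℝ := (k - x) / D with hadef
    have ha : 0 < a := div_pos (by linarith) hD
    have haD : a * D = k - x := div_mul_cancel₀ _ (ne_of_gt hD)
    obtain ⟨hea, h1a, h2a⟩ := key a ha
    refine ⟨a, ha, ?_⟩
    by_contra hne
    rcases lt_or_gt_of_ne hne with hlt | hlt
    · have hD' := hpjD_lt hk h1a hlt
      nlinarith
    · have hD' := hpjD_lt hk hx1 hlt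
      nlinarith
  -- negated Z is strictly monotone on Ioi 0
  have hmono : StrictMonoOn (fun a => -Z a) (Set.Ioi 0) := by
    intro a ha b hb hab
    simp only [neg_lt_neg_iff]
    exact hanti a b ha hb hab
  -- continuity at each point
  intro a ha
  have ha' : (0:ℝ) < a := ha
  obtain ⟨_, h1a, h2a⟩ := key a ha'
  have hnhds : Set.Ioi (0:ℝ) ∈ nhds a := isOpen_Ioi.mem_nhds ha
  have himg : (fun a => -Z a) '' Set.Ioi 0 ∈ nhds (-Z a) := by
    have hsub : Set.Ioo (-(k:ℝ)) (-1) ⊆ (fun a => -Z a) '' Set.Ioi 0 := by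
      rintro y ⟨hy1, hy2⟩
      obtain ⟨b, hb, hbx⟩ := hsurj (show -y ∈ Set.Ioo (1:ℝ) k from ⟨by linarith, by linarith⟩)
      exact ⟨b, hb, by simp [hbx]⟩
    exact Filter.mem_of_superset
      (isOpen_Ioo.mem_nhds ⟨by simpa using h2a, by simpa using h1a⟩) hsub
  have hcont : ContinuousAt (fun a => -Z a) a :=
    hmono.continuousAt_of_image_mem_nhds hnhds himg
  have : ContinuousAt Z a := by
    have := hcont.neg
    convert this using 1
    funext x
    simp
  exact this.continuousWithinAt
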